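/- For every k ≥ 2 and every 1 ≤ i ≤ k−1, the i-th lexicographically smallest suffix (with a < b) of F''_{2k} (the word F_{2k} with its last two characters removed) is the suffix starting at position f_{2k} − 1 − Σ_{j=0}^{i-1}|φ^j(a)|; equivalently, this suffix equals φ^{i-1}(a)·φ^{i-2}(a)⋯φ^0(a). -/

import Mathlib

/-- Strings over the binary alphabet `{a, b}`: `false` is `a`, `true` is `b`. -/
abbrev Word := List Bool

/-- `w` is primitive if it is not of the form `x^j` for any `j ≥ 2`. -/
def Primitive (w : Word) : Prop := ¬ ∃ (x : Word) (j : ℕ), 2 ≤ j ∧ w = (List.replicate j x).flatten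

/-- `u` occurs in `w` at (0-indexed) position `i`. -/
def occursAt (u w : Word) (i : ℕ) : Prop :=
  i + u.length ≤ w.length ∧ (w.drop i).take u.length = u

instance (u w : Word) (i : ℕ) : Decidable (occursAt u w i) := by
  unfold occursAt; infer_instance

/-- Fibonacci words: `F 1 = b`, `F 2 = a`, `F (k+1) = F k ++ F (k-1)`. -/
def F : ℕ → Word
  | 0 => []
  | 1 => [true]
  | 2 => [false]
  | (n+3) => F (n+2) ++ F (n+1)

/-- Fibonacci numbers with `f 1 = f 2 = 1`. -/
def f : ℕ → ℕ
  | 0 => 0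
  | 1 => 1
  | (n+2) => f (n+1) + f n

/-- The morphism `φ(a) = aab`, `φ(b) = ab`. -/
def phi (w : Word) : Word := w.flatMap fun c => if c then [false, true] else [false, false, true]

/-- Lexicographic order on words induced by `a < b` (a proper prefix is smaller). -/
def wlt (x y : Word) : Prop := List.Lex (· < ·) x y

/-- `u` is a border of `w`: a proper substring that is both a prefix and a suffix. -/
def IsBorder (u w : Word) : Prop := u ≠ w ∧ u <+: w ∧ u <:+ w

/-- `w` is a Lyndon word: it is smaller than all of its proper nonempty suffixes. -/
def IsLyndon (w : Word) : Prop := ∀ s : Word, s <:+ w → s ≠ [] → s ≠ w → wlt w s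

/-- `fs` is the Lyndon factorization of `w`: a factorization into nonempty Lyndon
words that is lexicographically non-increasing (powers written as repetitions). -/
def IsLyndonFactorization (w : Word) (fs : List Word) : Prop :=
  fs.flatten = w ∧ (∀ x ∈ fs, IsLyndon x ∧ x ≠ []) ∧ List.Chain' (fun x y => ¬ wlt x y) fs

/-- `ℓ 1 = ab`, `ℓ (k+1) = φ (ℓ k)`. -/
def ell : ℕ → Word
  | 0 => []
  | 1 => [false, true]
  | (n+2) => phi (ell (n+1))

namespace Aux

def de : ℕ → Word × Word
  | 0 => ([false], [true])
  | (j+1) => ((de j).1 ++ (de j).1 ++ (de j).2, (de j).1 ++ (de j).2)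

def d (j : ℕ) : Word := (de j).1
def e (j : ℕ) : Word := (de j).2

lemma d_zero : d 0 = [false] := rfl
lemma e_zero : e 0 = [true] := rfl
lemma d_succ (j : ℕ) : d (j+1) = d j ++ d j ++ e j := rfl
lemma e_succ (j : ℕ) : e (j+1) = d j ++ e j := rfl

def s : ℕ → Word
  | 0 => []
  | (i+1) => d i ++ s i

def W : ℕ → Word
  | 0 => []
  | 1 => []
  | 2 => [false]
  | (k+3) => W (k+2) ++ [true] ++ s (k+2)

lemma phi_append (x y : Word) : phi (x ++ y) = phi x ++ phi y := List.flatMap_append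

lemma phi_de (j : ℕ) : phi (d j) = d (j+1) ∧ phi (e j) = e (j+1) := by
  induction j with
  | zero => exact ⟨rfl, rfl⟩
  | succ j ih =>
    constructor
    · rw [d_succ j, phi_append, phi_append, ih.1, ih.2]
      exact (d_succ (j+1)).symm
    · rw [e_succ j, phi_append, ih.1, ih.2]
      exact (e_succ (j+1)).symm

lemma iter_phi (j : ℕ) : phi^[j] [false] = d j := by
  induction j with
  | zero => rfl
  | succ j ih => rw [Function.iterate_succ_apply', ih, (phi_de j).1]

lemma len_de (j : ℕ) : (d j).length = f (2*j+2) ∧ (e j).length = f (2*j+1) := by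
  induction j with
  | zero => exact ⟨rfl, rfl⟩
  | succ j ih =>
    have h1 : 2*(j+1)+2 = (2*j+2) + 2 := by ring
    have h2 : 2*(j+1)+1 = (2*j+1) + 2 := by ring
    constructor
    · rw [d_succ, h1]
      simp only [List.length_append, ih.1, ih.2]
      show _ = f (2*j+2+1) + f (2*j+2)
      have : 2*j+2+1 = (2*j+1)+2 := by ring
      rw [this]
      show _ = (f (2*j+2) + f (2*j+1)) + f (2*j+2)
      omega
    · rw [e_succ, h2]
      simp only [List.length_append, ih.1, ih.2]
      show _ = f (2*j+2) + f (2*j+1)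
      omega

lemma len_s (i : ℕ) : (s i).length + 1 = f (2*i+1) := by
  induction i with
  | zero => rfl
  | succ i ih =>
    show (d i ++ s i).length + 1 = f (2*(i+1)+1)
    have h : 2*(i+1)+1 = (2*i+2)+1 := by ring
    rw [h]
    show _ = f (2*i+2) + f (2*i+1)
    simp only [List.length_append, (len_de i).1]
    omega

lemma de_s (j : ℕ) : d j ++ e j = s (j+1) ++ [true] := by
  induction j with
  | zero => rfl
  | succ j ih =>
    show (d j ++ d j ++ e j) ++ (d j ++ e j) = (d (j+1) ++ s (j+1)) ++ [true]
    rw [ih, d_succ j]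
    simp [List.append_assoc]

lemma d_W (m : ℕ) : d (m+1) = false :: (W (m+2) ++ [true]) := by
  induction m with
  | zero => rfl
  | succ m ih =>
    show d (m+1) ++ d (m+1) ++ e (m+1) = false :: (W (m+2) ++ [true] ++ s (m+2) ++ [true])
    calc d (m+1) ++ d (m+1) ++ e (m+1)
        = d (m+1) ++ (d (m+1) ++ e (m+1)) := by simp [List.append_assoc]
      _ = (false :: (W (m+2) ++ [true])) ++ (s (m+2) ++ [true]) := by rw [de_s (m+1), ih]
      _ = _ := by simp [List.append_assoc]


lemma FW (m : ℕ) : F (2*m+4) = W (m+2) ++ [true, false] ∧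
    s (m+2) = false :: (F (2*m+3) ++ W (m+2)) := by
  induction m with
  | zero => constructor <;> rfl
  | succ m ih =>
    have hF5' : F ((2*m+2)+3) = F (2*m+4) ++ F (2*m+3) := by
      show F ((2*m+2)+2) ++ F ((2*m+2)+1) = _
      have h5 : (2*m+2)+2 = 2*m+4 := by ring
      have h6 : (2*m+2)+1 = 2*m+3 := by ring
      rw [h5, h6]
    have hF6 : F (2*(m+1)+4) = F (2*m+4) ++ F (2*m+3) ++ F (2*m+4) := by
      have h1 : 2*(m+1)+4 = (2*m+3)+3 := by ring
      rw [h1]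
      show F ((2*m+3)+2) ++ F ((2*m+3)+1) = _
      have h3 : (2*m+3)+2 = (2*m+2)+3 := by ring
      have h4 : (2*m+3)+1 = 2*m+4 := by ring
      rw [h3, h4, hF5']
    have hWs : W (m+3) = W (m+2) ++ [true] ++ s (m+2) := rfl
    have key : W (m+3) ++ [true] ++ s (m+2) = F (2*m+4) ++ (F (2*m+3) ++ W (m+3)) := by
      calc W (m+3) ++ [true] ++ s (m+2)
          = W (m+2) ++ [true] ++ (false :: (F (2*m+3) ++ W (m+2))) ++ [true] ++ s (m+2) := by
            rw [hWs, ← ih.2]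
        _ = (W (m+2) ++ [true, false]) ++ (F (2*m+3) ++ (W (m+2) ++ [true] ++ s (m+2))) := by
            simp [List.append_assoc]
        _ = F (2*m+4) ++ (F (2*m+3) ++ W (m+3)) := by rw [← ih.1, hWs]
    constructor
    · rw [hF6, ih.1]
      have : 2*(m+1)+4 = 2*m+6 := by ring
      calc W (m+2) ++ [true, false] ++ F (2*m+3) ++ (W (m+2) ++ [true, false])
          = (W (m+2) ++ [true] ++ (false :: (F (2*m+3) ++ W (m+2)))) ++ [true, false] := by
            simp [List.append_assoc]
        _ = (W (m+2) ++ [true] ++ s (m+2)) ++ [true, false] := by rw [← ih.2]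
        _ = W (m+1+2) ++ [true, false] := rfl
    · have hs : s (m+3) = d (m+2) ++ s (m+2) := rfl
      have hF5 : F (2*(m+1)+3) = F (2*m+4) ++ F (2*m+3) := by
        have h1 : 2*(m+1)+3 = (2*m+2)+3 := by ring
        rw [h1, hF5']
      show s (m+3) = false :: (F (2*(m+1)+3) ++ W (m+3))
      rw [hs, d_W (m+1), hF5]
      calc false :: (W (m+2+1) ++ [true]) ++ s (m+2)
          = false :: (W (m+3) ++ [true] ++ s (m+2)) := by simp [List.append_assoc]
        _ = false :: (F (2*m+4) ++ (F (2*m+3) ++ W (m+3))) := by rw [key]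
        _ = _ := by simp [List.append_assoc]

lemma len_F (n : ℕ) : (F n).length = f n := by
  induction n using Nat.strong_induction_on with
  | _ n ih =>
    match n with
    | 0 => rfl
    | 1 => rfl
    | 2 => rfl
    | (m+3) =>
      show (F (m+2) ++ F (m+1)).length = f (m+2) + f (m+1)
      rw [List.length_append, ih (m+2) (by omega), ih (m+1) (by omega)]

lemma f_pos (n : ℕ) : 1 ≤ f (n+1) := by
  induction n using Nat.strong_induction_on with
  | _ n ih =>
    match n with
    | 0 => exact le_refl 1
    | 1 => exact le_refl 1
    | (m+2) =>
      show 1 ≤ f (m+2) + f (m+1)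
      have h := ih (m+1) (by omega)
      have h2 : f (m+1+1) = f (m+2) := rfl
      omega

lemma f_mono : Monotone f := by
  apply monotone_nat_of_le_succ
  intro n
  match n with
  | 0 => exact Nat.zero_le _
  | (m+1) => show f (m+1) ≤ f (m+1) + f m; omega


lemma sA_pre_d (j : ℕ) : s j ++ [false] <+: d j := by
  induction j with
  | zero => exact List.prefix_refl _
  | succ j ih =>
    show (d j ++ s j) ++ [false] <+: d j ++ d j ++ e j
    rw [List.append_assoc, List.append_assoc (d j)]
    exact (List.prefix_append_right_inj (d j)).2 (ih.trans (List.prefix_append _ _))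

lemma d_pre_s (j : ℕ) : d j <+: s (j+1) := List.prefix_append _ _

lemma s_pre_succ (j : ℕ) : s j <+: s (j+1) :=
  (((List.prefix_append _ [false]).trans (sA_pre_d j)).trans (d_pre_s j))

lemma s_pre {j m : ℕ} (h : j ≤ m) : s j <+: s m := by
  induction h with
  | refl => exact List.prefix_refl _
  | step h ih => exact ih.trans (s_pre_succ _)

lemma sA_pre {j m : ℕ} (h : j < m) : s j ++ [false] <+: s m :=
  ((sA_pre_d j).trans (d_pre_s j)).trans (s_pre h)

lemma s_suf {j m : ℕ} (h : j ≤ m) : s j <:+ s m := by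
  induction h with
  | refl => exact List.suffix_refl _
  | step h ih => exact ih.trans (List.suffix_append _ _)

lemma head_d (j : ℕ) : [false] <+: d j := by
  induction j with
  | zero => exact List.prefix_refl _
  | succ j ih =>
    show [false] <+: d j ++ d j ++ e j
    exact ih.trans ((List.prefix_append (d j) (d j)).trans (List.prefix_append _ (e j)))

lemma head_s (m : ℕ) : [false] <+: s (m+1) :=
  (head_d m).trans (d_pre_s m)

lemma s_suf_W (m : ℕ) : s (m+1) <:+ W (m+2) := by
  cases m with
  | zero => exact List.suffix_refl _
  | succ m =>
    show s (m+2) <:+ W (m+2) ++ [true] ++ s (m+2)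
    exact List.suffix_append _ _

-- lex lemmas
lemma lex_proper {u x : Word} (h : x ≠ []) : wlt u (u ++ x) := by
  induction u with
  | nil => cases x with
    | nil => exact absurd rfl h
    | cons a l => exact List.Lex.nil
  | cons a l ih => exact List.Lex.cons ih

lemma lex_mismatch (p u v : Word) : wlt (p ++ false :: u) (p ++ true :: v) := by
  induction p with
  | nil => exact List.Lex.rel (by simp)
  | cons a l ih => exact List.Lex.cons ih

lemma lex_irrefl (x : Word) : ¬ wlt x x := by
  induction x with
  | nil => intro h; cases h
  | cons a l ih => intro h; cases h with
    | cons h => exact ih h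
    | rel h => exact lt_irrefl _ h

lemma lex_asymm : ∀ {x y : Word}, wlt x y → wlt y x → False := by
  intro x y h1
  induction h1 with
  | nil => intro h2; cases h2
  | cons h ih => intro h2; cases h2 with
    | cons h' => exact ih h'
    | rel h' => exact lt_irrefl _ h'
  | rel h => intro h2; cases h2 with
    | cons h' => exact lt_irrefl _ h
    | rel h' => exact absurd h (lt_asymm h')

def MLt (x y : Word) : Prop := ∃ p : Word, p ++ [false] <+: x ∧ p ++ [true] <+: y

lemma mlt_wlt {x y : Word} (h : MLt x y) : wlt x y := by
  obtain ⟨p, ⟨u, hu⟩, ⟨v, hv⟩⟩ := h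
  rw [← hu, ← hv]
  simp only [List.append_assoc, List.singleton_append]
  exact lex_mismatch p u v

lemma suffix_append_split {t x y : Word} (h : t <:+ x ++ y) :
    t <:+ y ∨ ∃ t' : Word, t' <:+ x ∧ t' ≠ [] ∧ t = t' ++ y := by
  induction x with
  | nil => exact Or.inl (by simpa using h)
  | cons a l ih =>
    rw [List.cons_append, List.suffix_cons_iff] at h
    rcases h with h | h
    · exact Or.inr ⟨a :: l, List.suffix_refl _, by simp, by simpa using h⟩
    · rcases ih h with h | ⟨t', h1, h2, h3⟩
      · exact Or.inl h
      · exact Or.inr ⟨t', h1.trans (List.suffix_cons _ _), h2, h3⟩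


lemma suffix_singleton {t : Word} {a : Bool} (h : t <:+ [a]) (hne : t ≠ []) : t = [a] := by
  rw [List.suffix_cons_iff] at h
  rcases h with h | h
  · exact h
  · exact absurd (List.suffix_nil.1 h) hne

lemma s_one : s 1 = [false] := rfl

lemma main (m : ℕ) :
    (∀ t : Word, t <:+ s (m+1) → t ≠ [] → (∃ j, 1 ≤ j ∧ j ≤ m+1 ∧ t = s j) ∨ MLt (s (m+1)) t) ∧
    (∀ t : Word, t <:+ W (m+2) → t ≠ [] → (∃ j, 1 ≤ j ∧ j ≤ m+1 ∧ t = s j) ∨ MLt (s (m+1)) t) := by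
  induction m with
  | zero =>
    constructor <;>
    · intro t ht hne
      exact Or.inl ⟨1, le_refl _, le_refl _, suffix_singleton ht hne⟩
  | succ m ih =>
    obtain ⟨Sm, Lm⟩ := ih
    have sps : s (m+1) <+: s (m+2) := s_pre_succ (m+1)
    have up : ∀ t : Word, MLt (s (m+1)) t → MLt (s (m+2)) t := by
      rintro t ⟨p, h1, h2⟩; exact ⟨p, h1.trans sps, h2⟩
    have hd : s (m+2) = d (m+1) ++ s (m+1) := rfl
    have S2 : ∀ t : Word, t <:+ s (m+2) → t ≠ [] →
        (∃ j, 1 ≤ j ∧ j ≤ m+2 ∧ t = s j) ∨ MLt (s (m+2)) t := by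
      intro t ht hne
      rw [hd] at ht
      rcases suffix_append_split ht with h | ⟨t'', h1, h2, h3⟩
      · rcases Sm t h hne with ⟨j, hj1, hj2, hj3⟩ | h
        · exact Or.inl ⟨j, hj1, by omega, hj3⟩
        · exact Or.inr (up t h)
      · rw [d_W m, List.suffix_cons_iff] at h1
        rcases h1 with h1 | h1
        · left
          refine ⟨m+2, by omega, le_refl _, ?_⟩
          rw [h3, hd, h1, d_W m]
        · rcases suffix_append_split h1 with h4 | ⟨t₃, h4, h5, h6⟩
          · have ht'' : t'' = [true] := suffix_singleton h4 h2
            right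
            refine ⟨[], by simpa using head_s (m+1), ?_⟩
            rw [h3, ht'']
            simp
          · rcases Lm t₃ h4 h5 with ⟨j, hj1, hj2, hj3⟩ | ⟨p, hp1, hp2⟩
            · right
              refine ⟨s j, sA_pre (show j < m+2 by omega), ?_⟩
              rw [h3, h6, hj3, List.append_assoc]
              exact (List.prefix_append_right_inj (s j)).2 (List.prefix_append [true] _)
            · right
              have ht₃ : t₃ <+: t := by
                rw [h3, h6, List.append_assoc]
                exact List.prefix_append _ _
              exact ⟨p, hp1.trans sps, hp2.trans ht₃⟩
    have L3 : ∀ t : Word, t <:+ W (m+3) → t ≠ [] →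
        (∃ j, 1 ≤ j ∧ j ≤ m+2 ∧ t = s j) ∨ MLt (s (m+2)) t := by
      intro t ht hne
      have hW : W (m+3) = W (m+2) ++ ([true] ++ s (m+2)) := by
        show W (m+2) ++ [true] ++ s (m+2) = _
        rw [List.append_assoc]
      rw [hW] at ht
      rcases suffix_append_split ht with h | ⟨t', h1, h2, h3⟩
      · rw [List.singleton_append, List.suffix_cons_iff] at h
        rcases h with h | h
        · right
          refine ⟨[], by simpa using head_s (m+1), ?_⟩
          rw [h]; simp
        · exact S2 t h hne
      · rcases Lm t' h1 h2 with ⟨j, hj1, hj2, hj3⟩ | ⟨p, hp1, hp2⟩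
        · right
          refine ⟨s j, sA_pre (show j < m+2 by omega), ?_⟩
          rw [h3, hj3, ← List.append_assoc]
          exact List.prefix_append _ _
        · right
          have ht' : t' <+: t := by rw [h3]; exact List.prefix_append _ _
          exact ⟨p, hp1.trans sps, hp2.trans ht'⟩
    exact ⟨S2, L3⟩


lemma sum_len (i : ℕ) : (∑ j ∈ Finset.range i, (phi^[j] [false]).length) + 1 = f (2*i+1) := by
  induction i with
  | zero => rfl
  | succ i ih =>
    rw [Finset.sum_range_succ, iter_phi i]
    have e1 : f (2*(i+1)+1) = f (2*i+2) + f (2*i+1) := by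
      have : 2*(i+1)+1 = (2*i+1)+2 := by ring
      rw [this]; rfl
    rw [e1, (len_de i).1]
    omega

lemma flatten_s (i : ℕ) : ((List.range i).reverse.map (fun j => phi^[j] [false])).flatten = s i := by
  induction i with
  | zero => rfl
  | succ i ih =>
    rw [List.range_succ, List.reverse_append]
    simp only [List.reverse_singleton, List.singleton_append, List.map_cons, List.flatten_cons, ih,
      iter_phi i]
    rfl

lemma drop_of_suffix {y w : Word} (h : y <:+ w) : w.drop (w.length - y.length) = y := by
  obtain ⟨u, rfl⟩ := h
  rw [List.length_append, Nat.add_sub_cancel]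
  exact List.drop_left

lemma dropdrop (X : Word) : (X ++ [true, false]).dropLast.dropLast = X := by
  have e : X ++ [true, false] = (X ++ [true]) ++ [false] := by simp [List.append_assoc]
  rw [e, List.dropLast_concat, List.dropLast_concat]

lemma f_odd_lt {j i : ℕ} (h : j < i) : f (2*j+1) < f (2*i+1) := by
  have e : f (2*j+3) = f (2*j+2) + f (2*j+1) := by
    have h1 : 2*j+3 = (2*j+1)+2 := by ring
    rw [h1]; rfl
  have hp : 1 ≤ f (2*j+2) := by
    have := f_pos (2*j+1)
    have h2 : 2*j+1+1 = 2*j+2 := by ring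
    rwa [h2] at this
  have hm : f (2*j+3) ≤ f (2*i+1) := f_mono (by omega)
  omega

lemma len_s_strict {j i : ℕ} (h : j < i) : (s j).length < (s i).length := by
  have h1 := len_s j
  have h2 := len_s i
  have := f_odd_lt h
  omega

lemma wlt_s_s {j i : ℕ} (h : j < i) : wlt (s j) (s i) := by
  obtain ⟨r, hr⟩ := s_pre (le_of_lt h)
  have hlen := len_s_strict h
  have hne : r ≠ [] := by
    intro hcon
    rw [hcon, List.append_nil] at hr
    rw [hr] at hlen
    omega
  rw [← hr]
  exact lex_proper hne

end Aux

/-- For `k ≥ 2` and `1 ≤ i ≤ k−1`, the `i`-th lexicographically smallest suffix of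
`F'' (2k)` (the word `F (2k)` with its last two characters removed) starts at
(1-indexed) position `f (2k) − 1 − Σ_{j<i} |φ^j(a)|` and equals `φ^(i-1)(a) ⋯ φ^0(a)`. -/
theorem stmt16 (k i : ℕ) (hk : 2 ≤ k) (hi1 : 1 ≤ i) (hi2 : i ≤ k - 1) :
    let w : Word := (F (2 * k)).dropLast.dropLast
    let p : ℕ := f (2 * k) - 1 - ∑ j ∈ Finset.range i, (phi^[j] [false]).length
    w.drop (p - 1) = ((List.range i).reverse.map (fun j => phi^[j] [false])).flatten ∧
      ((Finset.range w.length).filter (fun j => List.Lex (· < ·) (w.drop j) (w.drop (p - 1)))).card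
        = i - 1 := by

  intro w p
  open Aux in
  obtain ⟨m, rfl⟩ : ∃ m, k = m + 2 := ⟨k - 2, by omega⟩
  have hi : i ≤ m + 1 := by omega
  have h2k : 2 * (m + 2) = 2*m+4 := by ring
  have hw : w = W (m+2) := by
    show (F (2 * (m+2))).dropLast.dropLast = W (m+2)
    rw [h2k, (FW m).1, dropdrop]
  -- lengths
  have hwl : w.length + 2 = f (2*m+4) := by
    have hc := congrArg List.length (FW m).1
    rw [len_F] at hc
    rw [hw]
    simp only [List.length_append, List.length_cons, List.length_nil] at hc
    omega
  have hsl : (s i).length + 1 = f (2*i+1) := len_s i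
  have hsum : (∑ j ∈ Finset.range i, (phi^[j] [false]).length) + 1 = f (2*i+1) := sum_len i
  have hA : 2 ≤ f (2*i+1) := by
    have : f 3 ≤ f (2*i+1) := f_mono (by omega)
    have h3 : f 3 = 2 := rfl
    omega
  have hAB : f (2*i+1) < f (2*m+4) := by
    have h1 : f (2*i+1) ≤ f (2*m+3) := f_mono (by omega)
    have h2 : f (2*m+4) = f (2*m+3) + f (2*m+2) := by
      have : 2*m+4 = (2*m+2)+2 := by ring
      rw [this]; rfl
    have h3 : 1 ≤ f (2*m+2) := by
      have := f_pos (2*m+1)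
      have h4 : 2*m+1+1 = 2*m+2 := by ring
      rwa [h4] at this
    omega
  have hp1 : p - 1 = w.length - (s i).length := by
    show f (2 * (m+2)) - 1 - (∑ j ∈ Finset.range i, (phi^[j] [false]).length) - 1 = _
    rw [h2k]
    omega
  have hsw : s i <:+ W (m+2) := (s_suf hi).trans (s_suf_W m)
  have hdrop : w.drop (p - 1) = s i := by
    rw [hp1, hw]
    exact drop_of_suffix hsw
  constructor
  · rw [hdrop, flatten_s]
  · rw [hdrop]
    have hset : (Finset.range w.length).filter (fun q => List.Lex (· < ·) (w.drop q) (s i))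
        = (Finset.Icc 1 (i-1)).image (fun j => w.length - (s j).length) := by
      ext q
      simp only [Finset.mem_filter, Finset.mem_range, Finset.mem_image, Finset.mem_Icc]
      constructor
      · rintro ⟨hq, hlex⟩
        have hne : w.drop q ≠ [] := by
          rw [ne_eq, List.drop_eq_nil_iff]
          omega
        have hsuf : w.drop q <:+ W (m+2) := by rw [← hw]; exact List.drop_suffix q w
        rcases (main m).2 (w.drop q) hsuf hne with ⟨j, hj1, hj2, hj3⟩ | ⟨pp, hpp1, hpp2⟩
        · have hji : j < i := by
            by_contra hcon
            push_neg at hcon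
            rcases eq_or_lt_of_le hcon with hcon | hcon
            · rw [hj3, ← hcon] at hlex
              exact absurd hlex (lex_irrefl _)
            · rw [hj3] at hlex
              exact lex_asymm (wlt_s_s hcon) hlex
          refine ⟨j, ⟨hj1, by omega⟩, ?_⟩
          have hlq : (w.drop q).length = w.length - q := List.length_drop
          rw [hj3] at hlq
          omega
        · exfalso
          rcases le_or_gt (pp.length + 1) ((s i).length) with hle | hlt
          · have hpre : pp ++ [false] <+: s i := by
              refine List.prefix_of_prefix_length_le hpp1 (s_pre hi) ?_
              simp only [List.length_append, List.length_cons, List.length_nil]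
              omega
            exact lex_asymm (mlt_wlt ⟨pp, hpre, hpp2⟩) hlex
          · have hpre : s i <+: pp := by
              refine List.prefix_of_prefix_length_le (s_pre hi)
                ((List.prefix_append pp [false]).trans hpp1) ?_
              omega
            have hpt : s i <+: w.drop q :=
              hpre.trans ((List.prefix_append pp [true]).trans hpp2)
            obtain ⟨r, hr⟩ := hpt
            have hlenle := hpp2.length_le
            simp only [List.length_append, List.length_cons, List.length_nil] at hlenle
            have hrne : r ≠ [] := by
              intro hcon
              rw [hcon, List.append_nil] at hr
              have : (w.drop q).length = (s i).length := by rw [← hr]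
              omega
            rw [← hr] at hlex
            exact lex_asymm (lex_proper hrne) hlex
      · rintro ⟨j, ⟨hj1, hj2⟩, rfl⟩
        have hji : j < i := by omega
        have hsjw : s j <:+ w := by rw [hw]; exact (s_suf (by omega)).trans (s_suf_W m)
        have hjlen : 2 ≤ f (2*j+1) := by
          have : f 3 ≤ f (2*j+1) := f_mono (by omega)
          have h3 : f 3 = 2 := rfl
          omega
        have hslj := len_s j
        have hlenle : (s j).length ≤ w.length := hsjw.length_le
        have hdropj : w.drop (w.length - (s j).length) = s j := drop_of_suffix hsjw
        refine ⟨by omega, ?_⟩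
        rw [hdropj]
        exact wlt_s_s hji
    have hinj : Set.InjOn (fun j => w.length - (s j).length) (Finset.Icc 1 (i-1)) := by
      intro a ha b hb hab
      simp only [Finset.coe_Icc, Set.mem_Icc] at ha hb
      simp only at hab
      have hla : (s a).length ≤ w.length := by
        have hs : s a <:+ w := by rw [hw]; exact (s_suf (by omega)).trans (s_suf_W m)
        exact hs.length_le
      have hlb : (s b).length ≤ w.length := by
        have hs : s b <:+ w := by rw [hw]; exact (s_suf (by omega)).trans (s_suf_W m)
        exact hs.length_le
      rcases lt_trichotomy a b with h | h | h
      · have := len_s_strict h; omega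
      · exact h
      · have := len_s_strict h; omega
    rw [hset, Finset.card_image_of_injOn hinj, Nat.card_Icc]
    omega
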